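/- Every n-input process function w : P × Ω₁ × ⋯ × Ωₙ → F × A₁ × ⋯ × Aₙ has the property that each action component w_{A_i} is independent of the i-th observation: for all p, and all o⃗, o⃗' that differ only in the i-th coordinate, w_{A_i}(p, o⃗) = w_{A_i}(p, o⃗'). -/
import Mathlib


/-- Each action component of an `n`-input process function is
independent of its own party's observation. -/
theorem stmt_14 {n : ℕ} {P F : Type*} {Ω A : Fin n → Type*}
    [∀ i, Nontrivial (Ω i)]
    (w : P × (∀ i, Ω i) → F × (∀ i, A i))
    (hw : ∀ (f : ∀ i, A i → Ω i) (p : P),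
      ∃! o : ∀ i, Ω i, ∀ i, o i = f i ((w (p, o)).2 i)) :
    ∀ (p : P) (i : Fin n) (o o' : ∀ j, Ω j),
      (∀ j, j ≠ i → o j = o' j) → (w (p, o)).2 i = (w (p, o')).2 i := by
  intro p i o o' hoff
  by_cases hoi : o i = o' i
  · have : o = o' := funext fun j => by
      by_cases hj : j = i
      · subst hj; exact hoi
      · exact hoff j hj
    rw [this]
  · by_contra hne
    classical
    set a := (w (p, o)).2 i with ha
    set f : ∀ j, A j → Ω j :=
      Function.update (fun j (_ : A j) => o j) i (fun b => if b = a then o i else o' i)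
      with hf
    have hfi : f i = fun b => if b = a then o i else o' i := Function.update_self ..
    have hfj : ∀ j, j ≠ i → f j = fun _ => o j := fun j hj =>
      Function.update_of_ne hj _ _
    have ho : ∀ j, o j = f j ((w (p, o)).2 j) := by
      intro j
      by_cases hj : j = i
      · subst hj; rw [hfi]; simp [← ha]
      · rw [hfj j hj]
    have ho' : ∀ j, o' j = f j ((w (p, o')).2 j) := by
      intro j
      by_cases hj : j = i
      · subst hj; rw [hfi]; simp [Ne.symm hne]
      · rw [hfj j hj]; exact (hoff j hj).symm
    obtain ⟨u, -, huniq⟩ := hw f p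
    exact hoi ((huniq o ho).trans (huniq o' ho').symm ▸ rfl)
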